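/- arXiv:math/0511667 — 5 statements merged into one kernel-verified Lean document; each statement's English description precedes it below -/
import Mathlib

section
/- Let X be a class of groups closed under homomorphic images. If for each i in {1,...,t} the group H_i contains a subset of size n_i + 1 such that no two distinct elements of the subset generate a group in X, then the direct product H_1 × ... × H_t contains a subset of size (n_1 + ... + n_t) + 1 such that no two distinct elements generate a group in X. -/
universe u

theorem stmt0
    (X : ∀ (G : Type u) [Group G], Prop)
    (hX : ∀ (G H : Type u) [Group G] [Group H] (f : G →* H),
      Function.Surjective f → X G → X H)
    (t : ℕ) (Hg : Fin t → Type u) [∀ i, Group (Hg i)] (nf : Fin t → ℕ)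
    (hyp : ∀ i, ∃ S : Finset (Hg i), S.card = nf i + 1 ∧
      ∀ x ∈ S, ∀ y ∈ S, x ≠ y → ¬ X ↥(Subgroup.closure ({x, y} : Set (Hg i)))) :
    ∃ S : Finset (∀ i, Hg i), S.card = (∑ i, nf i) + 1 ∧
      ∀ x ∈ S, ∀ y ∈ S, x ≠ y →
        ¬ X ↥(Subgroup.closure ({x, y} : Set (∀ i, Hg i))) := by
  classical
  choose S hcard hprop using hyp
  set a : ∀ i, Fin (nf i + 1) → Hg i := fun i k =>
    ((S i).equivFin.symm (finCongr (hcard i).symm k) : Hg i) with ha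
  have hamem : ∀ i k, a i k ∈ S i := fun i k => ((S i).equivFin.symm _).2
  have hainj : ∀ i, Function.Injective (a i) := by
    intro i k l h
    have h2 := (S i).equivFin.symm.injective (Subtype.ext h)
    exact (finCongr (hcard i).symm).injective h2
  set g : Option ((i : Fin t) × Fin (nf i)) → ∀ i, Hg i := fun o =>
    match o with
    | none => fun i => a i 0
    | some ⟨i, j⟩ => Function.update (fun k => a k 0) i (a i j.succ) with hg
  have gmem : ∀ o i, g o i ∈ S i := by
    rintro (_ | ⟨i, j⟩) k
    · exact hamem _ _
    · by_cases h : k = i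
      · subst h; simp [g, hamem]
      · simp [g, Function.update_of_ne h, hamem]
  have key : ∀ o o' : Option ((i : Fin t) × Fin (nf i)), o ≠ o' →
      ∃ i, g o i ≠ g o' i := by
    rintro (_ | ⟨i, j⟩) (_ | ⟨i', j'⟩) hne
    · exact absurd rfl hne
    · refine ⟨i', ?_⟩
      simp only [g, Function.update_self]
      intro h
      exact Fin.succ_ne_zero j' (hainj i' h.symm)
    · refine ⟨i, ?_⟩
      simp only [g, Function.update_self]
      intro h
      exact Fin.succ_ne_zero j (hainj i h)
    · by_cases hii : i = i'
      · subst hii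
        have hjj : j ≠ j' := by
          intro h; subst h; exact hne rfl
        refine ⟨i, ?_⟩
        simp only [g, Function.update_self]
        intro h
        exact hjj (Fin.succ_injective _ (hainj i h))
      · refine ⟨i, ?_⟩
        simp only [g, Function.update_self, Function.update_of_ne hii]
        intro h
        exact Fin.succ_ne_zero j (hainj i h)
  have ginj : Function.Injective g := by
    intro o o' h
    by_contra hne
    obtain ⟨i, hi⟩ := key o o' hne
    exact hi (congrFun h i)
  refine ⟨Finset.image g Finset.univ, ?_, ?_⟩
  · rw [Finset.card_image_of_injective _ ginj, Finset.card_univ]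
    simp [Fintype.card_option, Fintype.card_sigma, add_comm]
  · intro x hx y hy hxy hXc
    obtain ⟨o, -, rfl⟩ := Finset.mem_image.mp hx
    obtain ⟨o', -, rfl⟩ := Finset.mem_image.mp hy
    have hne : o ≠ o' := fun h => hxy (by rw [h])
    obtain ⟨i, hi⟩ := key o o' hne
    set f : (∀ i, Hg i) →* Hg i := Pi.evalMonoidHom Hg i with hf
    have hmap : (Subgroup.closure ({g o, g o'} : Set (∀ i, Hg i))).map f
        = Subgroup.closure ({g o i, g o' i} : Set (Hg i)) := by
      rw [MonoidHom.map_closure]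
      congr 1
      simp [Set.image_insert_eq, f]
    have hX2 := hX _ _ (f.subgroupMap _) (f.subgroupMap_surjective _) hXc
    rw [hmap] at hX2
    exact hprop i _ (gmem o i) _ (gmem o' i) hi hX2
end

section
/- Suppose H_1, ..., H_t are finite groups such that for each i, H_i contains a subset of size n_i + 1 in which no two distinct elements generate a nilpotent subgroup. Then the direct product H_1 × ... × H_t contains a subset of size (n_1+1)(n_2+1)···(n_t+1) in which no two distinct elements generate a nilpotent subgroup. -/
universe u

theorem stmt1 (t : ℕ) (Hg : Fin t → Type u) [∀ i, Group (Hg i)] [∀ i, Finite (Hg i)]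
    (nf : Fin t → ℕ)
    (hyp : ∀ i, ∃ S : Finset (Hg i), S.card = nf i + 1 ∧
      ∀ x ∈ S, ∀ y ∈ S, x ≠ y →
        ¬ Group.IsNilpotent ↥(Subgroup.closure ({x, y} : Set (Hg i)))) :
    ∃ S : Finset (∀ i, Hg i), S.card = ∏ i, (nf i + 1) ∧
      ∀ x ∈ S, ∀ y ∈ S, x ≠ y →
        ¬ Group.IsNilpotent ↥(Subgroup.closure ({x, y} : Set (∀ i, Hg i))) := by
  classical
  letI : ∀ i, Fintype (Hg i) := fun i => Fintype.ofFinite _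
  choose S hScard hS using hyp
  refine ⟨Fintype.piFinset S, ?_, ?_⟩
  · rw [Fintype.card_piFinset]
    exact Finset.prod_congr rfl fun i _ => hScard i
  · intro x hx y hy hxy hnil
    obtain ⟨i, hi⟩ := Function.ne_iff.mp hxy
    rw [Fintype.mem_piFinset] at hx hy
    refine hS i (x i) (hx i) (y i) (hy i) hi ?_
    have key : (Subgroup.closure ({x, y} : Set (∀ i, Hg i))).map (Pi.evalMonoidHom Hg i)
        = Subgroup.closure ({x i, y i} : Set (Hg i)) := by
      rw [MonoidHom.map_closure]
      congr 1
      simp [Set.image_insert_eq]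
    have := nilpotent_of_surjective
      ((Pi.evalMonoidHom Hg i).subgroupMap (Subgroup.closure ({x, y} : Set (∀ i, Hg i))))
      (MonoidHom.subgroupMap_surjective _ _)
    rwa [key] at this
end

section
/- Let p be a prime, n a positive integer, and q an odd prime dividing p^n − 1. Then the number of Sylow q-subgroups of PSL(2, p^n) equals p^n(p^n + 1)/2, and the intersection of any two distinct Sylow q-subgroups is trivial. -/
open Matrix Pointwise
set_option linter.unusedSectionVars false
set_option linter.unnecessarySimpa false

variable {K : Type*} [Field K]

def tdiag : Kˣ →* SpecialLinearGroup (Fin 2) K where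
  toFun u := ⟨Matrix.diagonal ![u.val, (u⁻¹).val], by
    simp [Matrix.det_diagonal, Fin.prod_univ_two, ← Units.val_mul]⟩
  map_one' := by ext i j; fin_cases i <;> fin_cases j <;> simp [Matrix.diagonal]
  map_mul' u v := by
    ext i j
    show (Matrix.diagonal ![(u*v).val, ((u*v)⁻¹).val]) i j = (Matrix.diagonal ![u.val, (u⁻¹).val] * Matrix.diagonal ![v.val, (v⁻¹).val]) i j
    simp only [Matrix.SpecialLinearGroup.coe_mul, Matrix.diagonal_mul_diagonal]
    fin_cases i <;> fin_cases j <;> simp [Matrix.diagonal, mul_comm]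

lemma tdiag_apply (u : Kˣ) : ((tdiag u : SpecialLinearGroup (Fin 2) K) : Matrix (Fin 2) (Fin 2) K) = Matrix.diagonal ![u.val, (u⁻¹).val] := rfl

lemma tdiag_injective : Function.Injective (tdiag (K := K)) := by
  intro u v h
  have h2 := congrArg (fun m : SpecialLinearGroup (Fin 2) K => (m : Matrix (Fin 2) (Fin 2) K) 0 0) h
  simp only [tdiag_apply, Matrix.diagonal_apply_eq] at h2
  exact Units.ext (by simpa using h2)

lemma centralizer_tdiag {u : Kˣ} (hu : (u : K) ≠ ((u⁻¹ : Kˣ) : K))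
    {g : SpecialLinearGroup (Fin 2) K} (hg : g * tdiag u = tdiag u * g) :
    g ∈ tdiag.range := by
  have hmat : (g : Matrix (Fin 2) (Fin 2) K) * (tdiag u : Matrix (Fin 2) (Fin 2) K)
      = (tdiag u : Matrix (Fin 2) (Fin 2) K) * g := by
    have := congrArg (fun m : SpecialLinearGroup (Fin 2) K => (m : Matrix (Fin 2) (Fin 2) K)) hg
    simpa using this
  rw [Units.val_inv_eq_inv_val] at hu
  have h01 : (g : Matrix (Fin 2) (Fin 2) K) 0 1 = 0 := by
    have h := congrFun (congrFun hmat 0) 1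
    simp [tdiag_apply, Matrix.mul_diagonal, Matrix.diagonal_mul,
      Units.val_inv_eq_inv_val] at h
    by_contra hne
    exact hu (mul_left_cancel₀ hne (by linear_combination h)).symm
  have h10 : (g : Matrix (Fin 2) (Fin 2) K) 1 0 = 0 := by
    have h := congrFun (congrFun hmat 1) 0
    simp [tdiag_apply, Matrix.mul_diagonal, Matrix.diagonal_mul,
      Units.val_inv_eq_inv_val] at h
    by_contra hne
    exact hu (mul_left_cancel₀ hne (by linear_combination h))
  have hdet : (g : Matrix (Fin 2) (Fin 2) K) 0 0 * (g : Matrix (Fin 2) (Fin 2) K) 1 1 = 1 := by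
    have hp := g.property
    rw [Matrix.det_fin_two, h01] at hp
    linear_combination hp
  refine ⟨Units.mkOfMulEqOne _ _ hdet, ?_⟩
  have hinv : ((Units.mkOfMulEqOne _ _ hdet)⁻¹ : Kˣ).val
      = (g : Matrix (Fin 2) (Fin 2) K) 1 1 := rfl
  ext i j
  fin_cases i <;> fin_cases j <;>
    simp [tdiag_apply, Matrix.diagonal, h01, h10, hinv, Units.mkOfMulEqOne]

def wSL : SpecialLinearGroup (Fin 2) K :=
  ⟨!![0, 1; -1, 0], by simp [Matrix.det_fin_two]⟩

lemma wSL_conj (u : Kˣ) : (wSL : SpecialLinearGroup (Fin 2) K) * tdiag u * wSL⁻¹ = tdiag u⁻¹ := by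
  rw [mul_inv_eq_iff_eq_mul]
  ext i j
  simp only [Matrix.SpecialLinearGroup.coe_mul, tdiag_apply]
  fin_cases i <;> fin_cases j <;>
    simp [wSL, Matrix.mul_apply, Fin.sum_univ_two, Matrix.diagonal]

lemma wSL_conj' (u : Kˣ) : (wSL : SpecialLinearGroup (Fin 2) K)⁻¹ * tdiag u * wSL = tdiag u⁻¹ := by
  have := wSL_conj (K := K) u⁻¹
  rw [inv_inv] at this
  rw [← this]; group

lemma trace_tdiag (u : Kˣ) : Matrix.trace ((tdiag u : SpecialLinearGroup (Fin 2) K) : Matrix (Fin 2) (Fin 2) K) = (u : K) + ((u⁻¹ : Kˣ) : K) := by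
  simp [tdiag_apply, Matrix.trace_fin_two, Matrix.diagonal]

lemma conj_tdiag_cases {g : SpecialLinearGroup (Fin 2) K} {u v : Kˣ}
    (h : g * tdiag u * g⁻¹ = tdiag v) : v = u ∨ v = u⁻¹ := by
  have htr : (v : K) + ((v⁻¹ : Kˣ) : K) = (u : K) + ((u⁻¹ : Kˣ) : K) := by
    rw [← trace_tdiag, ← trace_tdiag, ← h]
    have : ((g * tdiag u * g⁻¹ : SpecialLinearGroup (Fin 2) K) : Matrix (Fin 2) (Fin 2) K)
        = ((g * tdiag u : SpecialLinearGroup (Fin 2) K) : Matrix (Fin 2) (Fin 2) K) *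
          ((g⁻¹ : SpecialLinearGroup (Fin 2) K) : Matrix (Fin 2) (Fin 2) K) := rfl
    rw [this, Matrix.trace_mul_comm]
    have h2 : ((g⁻¹ : SpecialLinearGroup (Fin 2) K) : Matrix (Fin 2) (Fin 2) K) *
        ((g * tdiag u : SpecialLinearGroup (Fin 2) K) : Matrix (Fin 2) (Fin 2) K)
        = ((g⁻¹ * (g * tdiag u) : SpecialLinearGroup (Fin 2) K) : Matrix (Fin 2) (Fin 2) K) := rfl
    rw [h2, inv_mul_cancel_left]
  rw [Units.val_inv_eq_inv_val, Units.val_inv_eq_inv_val] at htr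
  have hvu : ((v : K) - u) * ((v : K) * u - 1) = 0 := by
    have hu0 : (u : K) ≠ 0 := Units.ne_zero u
    have hv0 : (v : K) ≠ 0 := Units.ne_zero v
    field_simp at htr
    linear_combination htr
  rcases mul_eq_zero.mp hvu with h1 | h1
  · left; exact Units.ext (by linear_combination h1)
  · right
    refine Units.ext ?_
    rw [Units.val_inv_eq_inv_val]
    field_simp
    linear_combination h1

variable [Fintype K]

lemma det_GL_surjective :
    Function.Surjective (Matrix.GeneralLinearGroup.det : GL (Fin 2) K →* Kˣ) := by
  intro u
  refine ⟨⟨Matrix.diagonal ![u.val, 1], Matrix.diagonal ![(u⁻¹ : Kˣ).val, 1], ?_, ?_⟩, ?_⟩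
  · ext i j
    rw [Matrix.diagonal_mul_diagonal]
    fin_cases i <;> fin_cases j <;> simp [Matrix.diagonal, Units.val_inv_eq_inv_val]
  · ext i j
    rw [Matrix.diagonal_mul_diagonal]
    fin_cases i <;> fin_cases j <;> simp [Matrix.diagonal, Units.val_inv_eq_inv_val]
  · exact Units.ext (by simp [Matrix.GeneralLinearGroup.det, Matrix.det_diagonal, Fin.prod_univ_two])

lemma range_toGL :
    (Matrix.SpecialLinearGroup.toGL : SpecialLinearGroup (Fin 2) K →* GL (Fin 2) K).range
      = (Matrix.GeneralLinearGroup.det : GL (Fin 2) K →* Kˣ).ker := by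
  ext g
  constructor
  · rintro ⟨s, rfl⟩
    exact Units.ext (by simpa using s.property)
  · intro hg
    have hdet : ((g : Matrix (Fin 2) (Fin 2) K)).det = 1 := by
      have := congrArg Units.val hg
      simpa using this
    refine ⟨⟨(g : Matrix (Fin 2) (Fin 2) K), hdet⟩, ?_⟩
    ext i j
    rfl

lemma key_arith {r : ℕ} (hr2 : 2 ≤ r) :
    (r ^ 2 - 1) * (r ^ 2 - r) = (r - 1) * ((r - 1) * (r * (r + 1))) := by
  obtain ⟨m, rfl⟩ : ∃ m, r = m + 2 := ⟨r - 2, by omega⟩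
  have h1 : (m + 2) ^ 2 - 1 = (m + 1) * (m + 3) := by
    have : (m + 2) ^ 2 = (m + 1) * (m + 3) + 1 := by ring
    omega
  have h2 : (m + 2) ^ 2 - (m + 2) = (m + 2) * (m + 1) := by
    have : (m + 2) ^ 2 = (m + 2) * (m + 1) + (m + 2) := by ring
    omega
  have h3 : m + 2 - 1 = m + 1 := by omega
  rw [h1, h2, h3]
  ring

lemma card_SL2 : Nat.card (SpecialLinearGroup (Fin 2) K)
    = (Fintype.card K - 1) * (Fintype.card K * (Fintype.card K + 1)) := by
  obtain ⟨r, hr⟩ : ∃ r, Fintype.card K = r := ⟨_, rfl⟩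
  rw [hr]
  have hr2 : 2 ≤ r := hr ▸ Fintype.one_lt_card
  -- card GL
  have hGL : Nat.card (GL (Fin 2) K) = (r ^ 2 - 1) * (r ^ 2 - r) := by
    rw [Matrix.card_GL_field, hr]
    simp [Fin.prod_univ_two]
  -- SL ≃ ker det
  have e1 : Nat.card (SpecialLinearGroup (Fin 2) K)
      = Nat.card (Matrix.GeneralLinearGroup.det : GL (Fin 2) K →* Kˣ).ker := by
    rw [← range_toGL]
    exact Nat.card_congr (Equiv.ofInjective _ (by
      intro a b h
      ext i j
      exact congrFun (congrFun (congrArg (fun u : GL (Fin 2) K => (u : Matrix (Fin 2) (Fin 2) K)) h) i) j))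
  have e2 : Nat.card (GL (Fin 2) K)
      = (r - 1) * Nat.card (Matrix.GeneralLinearGroup.det : GL (Fin 2) K →* Kˣ).ker := by
    rw [Subgroup.card_eq_card_quotient_mul_card_subgroup
      (Matrix.GeneralLinearGroup.det : GL (Fin 2) K →* Kˣ).ker]
    congr 1
    rw [Nat.card_congr (QuotientGroup.quotientKerEquivOfSurjective _ det_GL_surjective).toEquiv]
    rw [Nat.card_units, Nat.card_eq_fintype_card, hr]
  rw [e1]
  have h3 := e2.symm.trans (hGL.trans (key_arith hr2))
  exact Nat.eq_of_mul_eq_mul_left (by omega) h3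

lemma not_dvd_of_pow_fact {q s c i : ℕ} (hq : q.Prime) (hs : s ≠ 0) (hc0 : c ≠ 0) (hc : ¬ q ∣ c)
    (hi : q ^ (s.factorization q) * i = s * c) : ¬ q ∣ i := by
  intro hdvd
  have h1 : q ^ (s.factorization q + 1) ∣ s * c := by
    obtain ⟨j, rfl⟩ := hdvd
    exact ⟨j, by rw [← hi]; ring⟩
  have h2 : (s * c).factorization q = s.factorization q := by
    rw [Nat.factorization_mul hs hc0]
    simp [Nat.factorization_eq_zero_of_not_dvd hc]
  rw [Nat.Prime.pow_dvd_iff_le_factorization hq (Nat.mul_ne_zero hs hc0), h2] at h1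
  omega

section Main
variable (q : ℕ) [Fact q.Prime]

local notation "G₂" => SpecialLinearGroup (Fin 2) K

theorem SL2_main (hodd : Odd q) (hdvd : q ∣ Fintype.card K - 1) :
    Nat.card (Sylow q (SpecialLinearGroup (Fin 2) K ⧸ Subgroup.center (SpecialLinearGroup (Fin 2) K)))
      = Fintype.card K * (Fintype.card K + 1) / 2 ∧
    ∀ P Q : Sylow q (SpecialLinearGroup (Fin 2) K ⧸ Subgroup.center (SpecialLinearGroup (Fin 2) K)),
      P ≠ Q → P.toSubgroup ⊓ Q.toSubgroup = ⊥ := by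
  have hq : q.Prime := Fact.out
  set r := Fintype.card K with hr
  have hr2 : 2 ≤ r := Fintype.one_lt_card
  have hq3 : 3 ≤ q := by
    have h2 := hq.two_le
    by_contra h
    have : q = 2 := by omega
    subst this
    exact (Nat.not_odd_iff_even.mpr (by decide)) hodd
  have hrq : q ≤ r - 1 := Nat.le_of_dvd (by omega) hdvd
  have hr4 : 4 ≤ r := by omega
  -- coprimality
  have hqr : ¬ q ∣ r := fun h => by
    have : q ∣ r - (r - 1) := Nat.dvd_sub h hdvd
    rw [show r - (r-1) = 1 by omega] at this
    have := Nat.le_of_dvd (by omega) this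
    omega
  have hqr1 : ¬ q ∣ r + 1 := fun h => by
    have : q ∣ (r + 1) - (r - 1) := Nat.dvd_sub h hdvd
    rw [show (r+1) - (r-1) = 2 by omega] at this
    have := Nat.le_of_dvd (by omega) this
    omega
  have hqrr : ¬ q ∣ r * (r + 1) := fun h => (hq.dvd_mul.mp h).elim hqr hqr1
  have hcardU : Nat.card Kˣ = r - 1 := by rw [Nat.card_units, Nat.card_eq_fintype_card]
  -- Sylow subgroup of the units
  obtain ⟨S₀⟩ : Nonempty (Sylow q Kˣ) := Sylow.nonempty
  set a := (Nat.card Kˣ).factorization q with ha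
  have cardS₀ : Nat.card S₀ = q ^ a := Sylow.card_eq_multiplicity S₀
  have ha1 : 1 ≤ a := by
    rw [ha, hcardU]
    exact hq.factorization_pos_of_dvd (by omega) hdvd
  have hS₀pow : ∀ u : Kˣ, u ∈ S₀ → ∃ k : ℕ, u ^ (q ^ k) = 1 := by
    intro u hu
    obtain ⟨k, hk⟩ := S₀.2 ⟨u, hu⟩
    exact ⟨k, by
      have := congrArg (Subtype.val) hk
      simpa using this⟩
  have hS₀sq : ∀ u : Kˣ, u ∈ S₀ → u ≠ 1 → (u : K) ≠ ((u⁻¹ : Kˣ) : K) := by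
    intro u hu hne heq
    have huu : u = u⁻¹ := Units.ext heq
    have h2 : u ^ 2 = 1 := by
      rw [pow_two]
      nth_rewrite 2 [huu]
      exact mul_inv_cancel u
    have hd2 : orderOf u ∣ 2 := orderOf_dvd_of_pow_eq_one h2
    obtain ⟨k, hk⟩ := hS₀pow u hu
    have hdq : orderOf u ∣ q ^ k := orderOf_dvd_of_pow_eq_one hk
    have hcop : Nat.Coprime 2 (q ^ k) := Nat.coprime_two_left.mpr (hodd.pow)
    have : orderOf u ∣ 1 := hcop ▸ Nat.dvd_gcd hd2 hdq
    exact hne (orderOf_eq_one_iff.mp (Nat.dvd_one.mp this))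
  -- an element of order q in S₀
  haveI : Fintype ↥(S₀ : Subgroup Kˣ) := Fintype.ofFinite _
  obtain ⟨u₀s, hu₀⟩ := exists_prime_orderOf_dvd_card (G := ↥(S₀ : Subgroup Kˣ)) q
    (by rw [← Nat.card_eq_fintype_card, cardS₀]; exact dvd_pow_self q (by omega))
  set lam : Kˣ := (u₀s : Kˣ) with hlam
  have hlmem : lam ∈ S₀ := u₀s.2
  have hlord : orderOf lam = q := by
    rw [← hu₀]
    exact orderOf_injective (S₀ : Subgroup Kˣ).subtype Subtype.coe_injective u₀s
  have hlne1 : lam ≠ 1 := by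
    intro h
    rw [h, orderOf_one] at hlord
    omega
  have hlsq : (lam : K) ≠ ((lam⁻¹ : Kˣ) : K) := hS₀sq lam hlmem hlne1
  -- the torus and the Sylow subgroup Q₀ of SL₂
  set T : Subgroup G₂ := tdiag.range with hT
  have cardT : Nat.card T = r - 1 := by
    rw [← hcardU]
    exact (Nat.card_congr (MonoidHom.ofInjective tdiag_injective).toEquiv).symm
  have Tcomm : ∀ x ∈ T, ∀ y ∈ T, x * y = y * x := by
    rintro x ⟨u, rfl⟩ y ⟨v, rfl⟩
    rw [← _root_.map_mul, ← _root_.map_mul, mul_comm]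
  set Q₀ : Subgroup G₂ := Subgroup.map tdiag (S₀ : Subgroup Kˣ) with hQ₀
  have memQ₀ : ∀ x, x ∈ Q₀ ↔ ∃ μ ∈ S₀, tdiag μ = x := fun x => Subgroup.mem_map
  have hQ₀T : Q₀ ≤ T := by
    rintro x ⟨μ, hμ, rfl⟩
    exact ⟨μ, rfl⟩
  have pQ₀ : IsPGroup q Q₀ := (S₀.2.map tdiag)
  have cardQ₀ : Nat.card Q₀ = q ^ a := by
    rw [← cardS₀]
    exact (Nat.card_congr (Subgroup.equivMapOfInjective _ _ tdiag_injective).toEquiv).symm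
  have cardG : Nat.card G₂ = (r - 1) * (r * (r + 1)) := card_SL2
  have hfact : (r - 1).factorization q = a := by rw [ha, hcardU]
  have hidx : ¬ q ∣ Q₀.index :=
    not_dvd_of_pow_fact hq (s := r - 1) (c := r * (r + 1)) (by omega) (by positivity) hqrr
      (by rw [hfact, ← cardQ₀, Subgroup.card_mul_index, cardG])
  set Syl₀ : Sylow q G₂ := pQ₀.toSylow hidx with hSyl₀
  have hSyl₀coe : (Syl₀ : Subgroup G₂) = Q₀ := rfl
  -- w is not in the torus
  have hwT : (wSL : G₂) ∉ T := by
    rintro ⟨ν, hν⟩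
    have h2 := congrArg (fun m : G₂ => (m : Matrix (Fin 2) (Fin 2) K) 0 0) hν
    simp only [tdiag_apply, Matrix.diagonal_apply_eq] at h2
    have h3 : ((wSL : G₂) : Matrix (Fin 2) (Fin 2) K) 0 0 = 0 := by
      simp [wSL]
    rw [h3] at h2
    simp at h2
  -- membership criterion for the normalizer
  have conjmem : ∀ g : G₂, (∀ μ : Kˣ, μ ∈ S₀ → g * tdiag μ * g⁻¹ ∈ Q₀) →
      (∀ μ : Kˣ, μ ∈ S₀ → g⁻¹ * tdiag μ * g ∈ Q₀) → g ∈ (Subgroup.normalizer (Q₀ : Set G₂)) := by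
    intro g h1 h2
    rw [Subgroup.mem_normalizer_iff]
    intro h
    constructor
    · rintro ⟨μ, hμ, rfl⟩
      exact h1 μ hμ
    · intro hc
      obtain ⟨μ, hμ, heq⟩ := (memQ₀ _).mp hc
      have : h = g⁻¹ * tdiag μ * g := by rw [heq]; group
      rw [this]
      exact h2 μ hμ
  have hTN : ∀ t ∈ T, t ∈ (Subgroup.normalizer (Q₀ : Set G₂)) := by
    rintro t ⟨ν, rfl⟩
    have key : ∀ μ : Kˣ, μ ∈ S₀ → ∀ s : Kˣ, tdiag s * tdiag μ * (tdiag s)⁻¹ ∈ Q₀ := by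
      intro μ hμ s
      have : tdiag s * tdiag μ * (tdiag s)⁻¹ = tdiag μ := by
        rw [← _root_.map_inv, ← _root_.map_mul, ← _root_.map_mul, mul_comm s μ,
          mul_inv_cancel_right]
      rw [this]
      exact ⟨μ, hμ, rfl⟩
    exact conjmem _ (fun μ hμ => key μ hμ ν)
      (fun μ hμ => by simpa using key μ hμ ν⁻¹)
  have hwTN : ∀ t ∈ T, wSL * t ∈ (Subgroup.normalizer (Q₀ : Set G₂)) := by
    rintro t ⟨ν, rfl⟩
    refine conjmem _ ?_ ?_
    · intro μ hμ
      have hc : tdiag ν * tdiag μ * (tdiag ν)⁻¹ = tdiag μ := by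
        rw [← _root_.map_inv, ← _root_.map_mul, ← _root_.map_mul, mul_comm ν μ,
          mul_inv_cancel_right]
      have h1 : wSL * tdiag ν * tdiag μ * (wSL * tdiag ν)⁻¹ = tdiag μ⁻¹ := by
        calc wSL * tdiag ν * tdiag μ * (wSL * tdiag ν)⁻¹
            = wSL * (tdiag ν * tdiag μ * (tdiag ν)⁻¹) * wSL⁻¹ := by group
          _ = wSL * tdiag μ * wSL⁻¹ := by rw [hc]
          _ = tdiag μ⁻¹ := wSL_conj μ
      rw [h1]
      exact ⟨μ⁻¹, inv_mem hμ, rfl⟩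
    · intro μ hμ
      have h1 : (wSL * tdiag ν)⁻¹ * tdiag μ * (wSL * tdiag ν) = tdiag μ⁻¹ := by
        calc (wSL * tdiag ν)⁻¹ * tdiag μ * (wSL * tdiag ν)
            = (tdiag ν)⁻¹ * (wSL⁻¹ * tdiag μ * wSL) * tdiag ν := by group
          _ = (tdiag ν)⁻¹ * tdiag μ⁻¹ * tdiag ν := by rw [wSL_conj']
          _ = tdiag μ⁻¹ := by
              rw [← _root_.map_inv, ← _root_.map_mul, ← _root_.map_mul,
                mul_comm ν⁻¹ μ⁻¹, inv_mul_cancel_right]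
      rw [h1]
      exact ⟨μ⁻¹, inv_mem hμ, rfl⟩
  have hNset : ((Subgroup.normalizer (Q₀ : Set G₂)) : Set G₂) = ↑T ∪ (fun t => wSL * t) '' ↑T := by
    ext g
    constructor
    · intro hg
      have hconj : g * tdiag lam * g⁻¹ ∈ Q₀ :=
        (Subgroup.mem_normalizer_iff.mp hg (tdiag lam)).mp ⟨lam, hlmem, rfl⟩
      obtain ⟨μ, hμ, heq⟩ := (memQ₀ _).mp hconj
      rcases conj_tdiag_cases heq.symm with h1 | h1
      · left
        subst h1
        rw [eq_comm, mul_inv_eq_iff_eq_mul] at heq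
        exact centralizer_tdiag hlsq heq
      · right
        subst h1
        have hg' : (wSL⁻¹ * g) * tdiag lam * (wSL⁻¹ * g)⁻¹ = tdiag lam := by
          calc (wSL⁻¹ * g) * tdiag lam * (wSL⁻¹ * g)⁻¹
              = wSL⁻¹ * (g * tdiag lam * g⁻¹) * wSL := by group
            _ = wSL⁻¹ * tdiag lam⁻¹ * wSL := by rw [← heq]
            _ = tdiag lam := by rw [wSL_conj', inv_inv]
        rw [mul_inv_eq_iff_eq_mul] at hg'
        have hmem : wSL⁻¹ * g ∈ T := centralizer_tdiag hlsq hg'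
        exact ⟨wSL⁻¹ * g, hmem, by group⟩
    · rintro (hg | ⟨t, ht, rfl⟩)
      · exact hTN g hg
      · exact hwTN t ht
  have cardN : Nat.card (Subgroup.normalizer (Q₀ : Set G₂)) = 2 * (r - 1) := by
    have h1 : Nat.card (Subgroup.normalizer (Q₀ : Set G₂)) = ((Subgroup.normalizer (Q₀ : Set G₂)) : Set G₂).ncard :=
      Nat.card_coe_set_eq _
    have hdisj : Disjoint (T : Set G₂) ((fun t => wSL * t) '' ↑T) := by
      rw [Set.disjoint_left]
      rintro g hgT ⟨t, ht, rfl⟩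
      exact hwT (by
        have : (wSL : G₂) = (wSL * t) * t⁻¹ := by group
        rw [this]
        exact mul_mem hgT (inv_mem ht))
    have hTcard : (T : Set G₂).ncard = r - 1 := by
      rw [← Nat.card_coe_set_eq]
      exact cardT
    rw [h1, hNset, Set.ncard_union_eq hdisj (Set.toFinite _) (Set.toFinite _),
      Set.ncard_image_of_injective _ (mul_right_injective wSL), hTcard]
    omega
  have countSL : Nat.card (Sylow q G₂) = r * (r + 1) / 2 := by
    rw [Sylow.card_eq_index_normalizer Syl₀]
    obtain ⟨m, hm⟩ := Nat.even_mul_succ_self r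
    have h1 := Subgroup.card_mul_index ((Subgroup.normalizer (Q₀ : Set G₂)))
    rw [cardN, cardG] at h1
    have h2 : 2 * (r - 1) * ((Subgroup.normalizer (Q₀ : Set G₂))).index = 2 * (r - 1) * m := by
      rw [h1]; rw [hm]; ring
    have h3 : ((Subgroup.normalizer (Q₀ : Set G₂))).index = m := Nat.eq_of_mul_eq_mul_left (by omega) h2
    have : Subgroup.normalizer (Syl₀ : Set G₂) = (Subgroup.normalizer (Q₀ : Set G₂)) := rfl
    rw [this, h3]
    omega
  -- trivial intersection of distinct Sylow subgroups of SL₂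
  have commConj : ∀ (c y z : G₂), c⁻¹ * y * c ∈ T → c⁻¹ * z * c ∈ T → y * z = z * y := by
    intro c y z hy hz
    have e1 : (c⁻¹ * y * c) * (c⁻¹ * z * c) = (c⁻¹ * z * c) * (c⁻¹ * y * c) :=
      Tcomm _ hy _ hz
    calc y * z = c * ((c⁻¹ * y * c) * (c⁻¹ * z * c)) * c⁻¹ := by group
      _ = c * ((c⁻¹ * z * c) * (c⁻¹ * y * c)) * c⁻¹ := by rw [e1]
      _ = z * y := by group
  have interSL : ∀ P Q : Sylow q G₂, P ≠ Q →
      (P : Subgroup G₂) ⊓ (Q : Subgroup G₂) = ⊥ := by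
    intro P Q hPQ
    rw [Subgroup.eq_bot_iff_forall]
    intro x hx
    by_contra hx1
    apply hPQ
    obtain ⟨hxP, hxQ⟩ := Subgroup.mem_inf.mp hx
    obtain ⟨g, hg⟩ := MulAction.exists_smul_eq G₂ Syl₀ P
    obtain ⟨h, hh⟩ := MulAction.exists_smul_eq G₂ Syl₀ Q
    have memP : ∀ y, y ∈ P ↔ g⁻¹ * y * g ∈ Q₀ := by
      intro y
      rw [← hg]
      show y ∈ (↑(g • Syl₀) : Subgroup G₂) ↔ _
      rw [Sylow.coe_subgroup_smul, hSyl₀coe,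
        Subgroup.mem_pointwise_smul_iff_inv_smul_mem]
      simp [MulAut.conj_inv_apply, mul_assoc]
    have memQ : ∀ y, y ∈ Q ↔ h⁻¹ * y * h ∈ Q₀ := by
      intro y
      rw [← hh]
      show y ∈ (↑(h • Syl₀) : Subgroup G₂) ↔ _
      rw [Sylow.coe_subgroup_smul, hSyl₀coe,
        Subgroup.mem_pointwise_smul_iff_inv_smul_mem]
      simp [MulAut.conj_inv_apply, mul_assoc]
    obtain ⟨μ, hμS, hμeq⟩ := (memQ₀ _).mp ((memP x).mp hxP)
    have hμ1 : μ ≠ 1 := by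
      intro hμ
      subst hμ
      apply hx1
      have : (1 : G₂) = g⁻¹ * x * g := by rw [← hμeq]; exact (_root_.map_one tdiag).symm
      have h2 : x = g * 1 * g⁻¹ := by rw [this]; group
      simpa using h2
    have hxform : x = g * tdiag μ * g⁻¹ := by rw [hμeq]; group
    set Kg : Subgroup G₂ := Subgroup.map (MulAut.conj g).toMonoidHom T with hKg
    have memKg : ∀ y, y ∈ Kg ↔ g⁻¹ * y * g ∈ T := by
      intro y
      constructor
      · rintro ⟨t, ht, rfl⟩
        simpa [mul_assoc] using ht
      · intro hy
        exact ⟨g⁻¹ * y * g, hy, by simp [mul_assoc]⟩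
    have hPKg : (P : Subgroup G₂) ≤ Kg := fun y hy =>
      (memKg y).mpr (hQ₀T ((memP y).mp hy))
    have hcent : ∀ y, y * x = x * y → y ∈ Kg := by
      intro y comm
      have hxc : y * (g * tdiag μ * g⁻¹) = (g * tdiag μ * g⁻¹) * y := by
        rw [← hxform]; exact comm
      have hcomm : (g⁻¹ * y * g) * tdiag μ = tdiag μ * (g⁻¹ * y * g) := by
        calc (g⁻¹ * y * g) * tdiag μ = g⁻¹ * (y * (g * tdiag μ * g⁻¹)) * g := by group
          _ = g⁻¹ * ((g * tdiag μ * g⁻¹) * y) * g := by rw [hxc]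
          _ = tdiag μ * (g⁻¹ * y * g) := by group
      exact (memKg y).mpr (centralizer_tdiag (hS₀sq μ hμS hμ1) hcomm)
    have hQKg : (Q : Subgroup G₂) ≤ Kg := by
      intro y hy
      refine hcent y ?_
      exact commConj h y x (hQ₀T ((memQ y).mp hy)) (hQ₀T ((memQ x).mp hxQ))
    have commKg : ∀ y ∈ Kg, ∀ z ∈ Kg, y * z = z * y := fun y hy z hz =>
      commConj g y z ((memKg y).mp hy) ((memKg z).mp hz)
    have cardKg : Nat.card Kg = r - 1 := by
      rw [← cardT]
      exact (Nat.card_congr (Subgroup.equivMapOfInjective _ _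
        (MulAut.conj g).injective).toEquiv).symm
    have cardP : Nat.card P = q ^ a := by
      rw [Sylow.card_eq_multiplicity P, ← Sylow.card_eq_multiplicity Syl₀]
      exact cardQ₀
    have cardQsyl : Nat.card Q = q ^ a := by
      rw [Sylow.card_eq_multiplicity Q, ← Sylow.card_eq_multiplicity Syl₀]
      exact cardQ₀
    set P' : Subgroup ↥Kg := (P : Subgroup G₂).subgroupOf Kg with hP'
    set Q' : Subgroup ↥Kg := (Q : Subgroup G₂).subgroupOf Kg with hQ'
    have cardP' : Nat.card P' = q ^ a := by
      rw [← cardP]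
      exact Nat.card_congr (Subgroup.subgroupOfEquivOfLe hPKg).toEquiv
    have cardQ' : Nat.card Q' = q ^ a := by
      rw [← cardQsyl]
      exact Nat.card_congr (Subgroup.subgroupOfEquivOfLe hQKg).toEquiv
    have pP' : IsPGroup q P' := P.2.of_equiv (Subgroup.subgroupOfEquivOfLe hPKg).symm
    have pQ' : IsPGroup q Q' := Q.2.of_equiv (Subgroup.subgroupOfEquivOfLe hQKg).symm
    have hidxP' : ¬ q ∣ P'.index :=
      not_dvd_of_pow_fact hq (s := r - 1) (c := 1) (by omega) one_ne_zero
        hq.not_dvd_one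
        (by rw [hfact, ← cardP', mul_one, ← cardKg]; exact Subgroup.card_mul_index _)
    have hidxQ' : ¬ q ∣ Q'.index :=
      not_dvd_of_pow_fact hq (s := r - 1) (c := 1) (by omega) one_ne_zero
        hq.not_dvd_one
        (by rw [hfact, ← cardQ', mul_one, ← cardKg]; exact Subgroup.card_mul_index _)
    obtain ⟨c, hc⟩ := MulAction.exists_smul_eq ↥Kg (pP'.toSylow hidxP') (pQ'.toSylow hidxQ')
    have hceq : MulAut.conj c • P' = Q' := by
      have := congrArg (fun s : Sylow q ↥Kg => (s : Subgroup ↥Kg)) hc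
      exact this
    have hfix : MulAut.conj c • P' = P' := by
      ext y
      rw [Subgroup.mem_pointwise_smul_iff_inv_smul_mem]
      have hcy : y * c = c * y := Subtype.ext (commKg _ y.2 _ c.2)
      have h4 : (MulAut.conj c)⁻¹ • y = c⁻¹ * y * c := by
        simp [MulAut.smul_def]
      rw [h4, mul_assoc, hcy, inv_mul_cancel_left]
    have hP'Q' : P' = Q' := by rw [← hfix, hceq]
    have : (P : Subgroup G₂) = (Q : Subgroup G₂) := by
      have h1 : (P' : Subgroup ↥Kg).map Kg.subtype = (P : Subgroup G₂) := by
        rw [hP', Subgroup.subgroupOf_map_subtype, inf_eq_left.mpr hPKg]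
      have h2 : (Q' : Subgroup ↥Kg).map Kg.subtype = (Q : Subgroup G₂) := by
        rw [hQ', Subgroup.subgroupOf_map_subtype, inf_eq_left.mpr hQKg]
      rw [← h1, ← h2, hP'Q']
    exact Sylow.ext this
  -- transfer to the quotient by the center
  set Z : Subgroup G₂ := Subgroup.center G₂ with hZdef
  set π : G₂ →* G₂ ⧸ Z := QuotientGroup.mk' Z with hπdef
  have hπs : Function.Surjective π := QuotientGroup.mk'_surjective Z
  have hZsq : ∀ z ∈ Z, z * z = 1 := by
    intro z hz
    obtain ⟨s, hs2, hs⟩ := Matrix.SpecialLinearGroup.mem_center_iff.mp hz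
    rw [Fintype.card_fin] at hs2
    apply Subtype.ext
    show (z : Matrix (Fin 2) (Fin 2) K) * (z : Matrix (Fin 2) (Fin 2) K) = 1
    rw [← hs, ← _root_.map_mul, ← pow_two, hs2, _root_.map_one]
  have hcentral : ∀ z ∈ Z, ∀ g : G₂, z * g = g * z := by
    intro z hz g
    exact (Subgroup.mem_center_iff.mp hz g).symm
  have hinj : Function.Injective (Sylow.mapSurjective hπs (p := q)) := by
    intro P₁ P₂ hmap
    have hmap' : (P₁ : Subgroup G₂).map π = (P₂ : Subgroup G₂).map π := by
      have := congrArg (fun s : Sylow q (G₂ ⧸ Z) => (s : Subgroup (G₂ ⧸ Z))) hmap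
      simpa using this
    set R : Subgroup G₂ := ((P₁ : Subgroup G₂).map π).comap π with hR
    have hP₁R : (P₁ : Subgroup G₂) ≤ R := Subgroup.le_comap_map _ _
    have hP₂R : (P₂ : Subgroup G₂) ≤ R := by rw [hR, hmap']; exact Subgroup.le_comap_map _ _
    set P₁' : Subgroup ↥R := (P₁ : Subgroup G₂).subgroupOf R with hP₁'
    set P₂' : Subgroup ↥R := (P₂ : Subgroup G₂).subgroupOf R with hP₂'
    have pP₁' : IsPGroup q P₁' := P₁.2.of_equiv (Subgroup.subgroupOfEquivOfLe hP₁R).symm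
    have pP₂' : IsPGroup q P₂' := P₂.2.of_equiv (Subgroup.subgroupOfEquivOfLe hP₂R).symm
    have hI₁ : ¬ q ∣ P₁'.index := fun hdq =>
      P₁.not_dvd_index (hdq.trans (Subgroup.relIndex_dvd_index_of_le hP₁R))
    have hI₂ : ¬ q ∣ P₂'.index := fun hdq =>
      P₂.not_dvd_index (hdq.trans (Subgroup.relIndex_dvd_index_of_le hP₂R))
    obtain ⟨c, hc⟩ := MulAction.exists_smul_eq ↥R (pP₁'.toSylow hI₁) (pP₂'.toSylow hI₂)
    have hceq : MulAut.conj c • P₁' = P₂' := by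
      have := congrArg (fun s : Sylow q ↥R => (s : Subgroup ↥R)) hc
      exact this
    -- c is congruent to an element u of P₁ modulo the center
    have hcR : (c : G₂) ∈ R := c.2
    obtain ⟨u, huP₁, hπu⟩ := Subgroup.mem_comap.mp hcR
    obtain ⟨u, huP₁, hπu⟩ : ∃ u ∈ (P₁ : Subgroup G₂), π u = π (c : G₂) := by
      obtain ⟨u, hu, he⟩ := Subgroup.mem_map.mp (Subgroup.mem_comap.mp hcR)
      exact ⟨u, hu, he⟩
    have hzZ : (c : G₂) * u⁻¹ ∈ Z := by
      rw [← QuotientGroup.ker_mk' Z]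
      show π ((c : G₂) * u⁻¹) = 1
      rw [_root_.map_mul, _root_.map_inv, hπu]
      group
    set z : G₂ := (c : G₂) * u⁻¹ with hzdef
    have hcval : (c : G₂) = z * u := by rw [hzdef]; group
    have hconj_eq : ∀ y : G₂, (c : G₂)⁻¹ * y * (c : G₂) = u⁻¹ * y * u := by
      intro y
      rw [hcval]
      have hzy : z⁻¹ * y * z = y := by
        have h1 : z * y = y * z := hcentral z hzZ y
        rw [show z⁻¹ * y * z = z⁻¹ * (y * z) from by group, ← h1, inv_mul_cancel_left]
      calc (z * u)⁻¹ * y * (z * u) = u⁻¹ * (z⁻¹ * y * z) * u := by group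
        _ = u⁻¹ * y * u := by rw [hzy]
    have hA : ∀ y : G₂, y ∈ (P₂ : Subgroup G₂) ↔ (c : G₂)⁻¹ * y * (c : G₂) ∈ (P₁ : Subgroup G₂) := by
      intro y
      constructor
      · intro hy
        have hyR : y ∈ R := hP₂R hy
        have hy' : (⟨y, hyR⟩ : ↥R) ∈ P₂' := hy
        rw [← hceq, Subgroup.mem_pointwise_smul_iff_inv_smul_mem] at hy'
        exact hy'
      · intro hy
        have hvR : (c : G₂)⁻¹ * y * (c : G₂) ∈ R := hP₁R hy
        have hyR : y ∈ R := by
          have : y = (c : G₂) * ((c : G₂)⁻¹ * y * (c : G₂)) * (c : G₂)⁻¹ := by group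
          rw [this]
          exact mul_mem (mul_mem c.2 hvR) (inv_mem c.2)
        have hy' : (⟨y, hyR⟩ : ↥R) ∈ MulAut.conj c • P₁' := by
          rw [Subgroup.mem_pointwise_smul_iff_inv_smul_mem]
          exact hy
        rw [hceq] at hy'
        exact hy'
    have hB : ∀ y : G₂, (c : G₂)⁻¹ * y * (c : G₂) ∈ (P₁ : Subgroup G₂) ↔ y ∈ (P₁ : Subgroup G₂) := by
      intro y
      rw [hconj_eq y]
      constructor
      · intro hy
        have : y = u * (u⁻¹ * y * u) * u⁻¹ := by group
        rw [this]
        exact mul_mem (mul_mem huP₁ hy) (inv_mem huP₁)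
      · intro hy
        exact mul_mem (mul_mem (inv_mem huP₁) hy) huP₁
    apply Sylow.ext
    ext y
    rw [hA y, hB y]
  have hcount : Nat.card (Sylow q (G₂ ⧸ Z)) = r * (r + 1) / 2 := by
    rw [← Nat.card_eq_of_bijective _ ⟨hinj, Sylow.mapSurjective_surjective hπs q⟩]
    exact countSL
  refine ⟨hcount, ?_⟩
  intro Pb Qb hne
  obtain ⟨P, rfl⟩ := Sylow.mapSurjective_surjective hπs q Pb
  obtain ⟨Q, rfl⟩ := Sylow.mapSurjective_surjective hπs q Qb
  have hPQ : P ≠ Q := fun h => hne (by rw [h])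
  rw [Subgroup.eq_bot_iff_forall]
  intro xb hxb
  obtain ⟨h1, h2⟩ := Subgroup.mem_inf.mp hxb
  rw [Sylow.coe_mapSurjective] at h1 h2
  obtain ⟨x₁, hx₁, hπx₁⟩ := Subgroup.mem_map.mp h1
  obtain ⟨x₂, hx₂, hπx₂⟩ := Subgroup.mem_map.mp h2
  have hzZ : x₁⁻¹ * x₂ ∈ Z := by
    rw [← QuotientGroup.ker_mk' Z]
    show π (x₁⁻¹ * x₂) = 1
    rw [_root_.map_mul, _root_.map_inv]
    rw [hπdef] at hπx₁ hπx₂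
    rw [hπx₁, hπx₂]
    group
  set z : G₂ := x₁⁻¹ * x₂ with hzdef
  have hx₂eq : x₂ = x₁ * z := by rw [hzdef]; group
  obtain ⟨k, hk⟩ := P.2 ⟨x₁, hx₁⟩
  obtain ⟨l, hl⟩ := Q.2 ⟨x₂, hx₂⟩
  have hk' : x₁ ^ (q ^ k) = 1 := by
    have := congrArg (Subtype.val) hk
    simpa using this
  have hl' : x₂ ^ (q ^ l) = 1 := by
    have := congrArg (Subtype.val) hl
    simpa using this
  have hcomm : Commute x₁⁻¹ x₂ := by
    have h3 : x₁ * x₂ = x₂ * x₁ := by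
      rw [hx₂eq]
      calc x₁ * (x₁ * z) = x₁ * x₁ * z := by group
        _ = x₁ * (z * x₁) := by rw [hcentral z hzZ x₁]; group
        _ = x₁ * z * x₁ := by group
    exact (Commute.inv_left (by exact h3))
  have hzpow : z ^ (q ^ (k + l)) = 1 := by
    rw [hzdef, hcomm.mul_pow]
    have e1 : x₁⁻¹ ^ q ^ (k + l) = 1 := by
      rw [inv_pow, pow_add, pow_mul, hk', one_pow, inv_one]
    have e2 : x₂ ^ q ^ (k + l) = 1 := by
      rw [pow_add, mul_comm (q ^ k), pow_mul, hl', one_pow]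
    rw [e1, e2, one_mul]
  have hz1 : z = 1 := by
    have hd2 : orderOf z ∣ 2 := orderOf_dvd_of_pow_eq_one (by
      rw [pow_two]; exact hZsq z hzZ)
    have hdq : orderOf z ∣ q ^ (k + l) := orderOf_dvd_of_pow_eq_one hzpow
    have hcop : Nat.Coprime 2 (q ^ (k + l)) := Nat.coprime_two_left.mpr hodd.pow
    have : orderOf z ∣ 1 := hcop ▸ Nat.dvd_gcd hd2 hdq
    exact orderOf_eq_one_iff.mp (Nat.dvd_one.mp this)
  have hx12 : x₁ = x₂ := by
    rw [hx₂eq, hz1, mul_one]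
  have hx₁bot : x₁ ∈ (P : Subgroup G₂) ⊓ (Q : Subgroup G₂) :=
    Subgroup.mem_inf.mpr ⟨hx₁, hx12 ▸ hx₂⟩
  rw [interSL P Q hPQ] at hx₁bot
  rw [← hπx₁, Subgroup.mem_bot.mp hx₁bot]
  exact _root_.map_one π

end Main

abbrev PSL (p n : ℕ) [Fact p.Prime] : Type :=
  Matrix.SpecialLinearGroup (Fin 2) (GaloisField p n) ⧸
    Subgroup.center (Matrix.SpecialLinearGroup (Fin 2) (GaloisField p n))

theorem stmt4 (p n q : ℕ) [Fact p.Prime] (hn : 0 < n) (hq : q.Prime) (hodd : Odd q)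
    (hdvd : q ∣ p ^ n - 1) :
    Nat.card (Sylow q (PSL p n)) = p ^ n * (p ^ n + 1) / 2 ∧
    ∀ P Q : Sylow q (PSL p n), P ≠ Q →
      (P : Subgroup (PSL p n)) ⊓ (Q : Subgroup (PSL p n)) = ⊥ := by
  haveI : Fintype (GaloisField p n) := Fintype.ofFinite _
  haveI : Fact q.Prime := ⟨hq⟩
  have hcard : Fintype.card (GaloisField p n) = p ^ n := by
    rw [← Nat.card_eq_fintype_card]
    exact GaloisField.card p n hn.ne'
  have hmain := SL2_main (K := GaloisField p n) q hodd (by rw [hcard]; exact hdvd)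
  rw [hcard] at hmain
  exact hmain
end

section
/- The alternating group A_5 is the union of its 21 Sylow subgroups (five Sylow 2-subgroups, ten Sylow 3-subgroups, six Sylow 5-subgroups), and choosing one non-identity element from each Sylow subgroup gives a set of 21 elements no two of which generate a nilpotent subgroup. -/
set_option maxRecDepth 40000

private abbrev A5 := alternatingGroup (Fin 5)

private lemma a5_orders : ∀ g : A5, g^2 = 1 ∨ g^3 = 1 ∨ g^5 = 1 := by decide

private lemma a5_card : Nat.card A5 = 60 := by
  rw [Nat.card_eq_fintype_card]; decide

private lemma cent_card_aux : ∀ x : A5, x^2 = 1 → x ≠ 1 →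
    (Finset.filter (fun g => g * x = x * g) Finset.univ).card = 4 := by decide

private lemma cent_card (x : A5) (h2 : x^2 = 1) (h1 : x ≠ 1) :
    Nat.card (Subgroup.centralizer ({x} : Set A5)) = 4 := by
  have e : ∀ g : A5, g ∈ Subgroup.centralizer ({x} : Set A5) ↔ g * x = x * g := by
    intro g
    simp only [Subgroup.mem_centralizer_iff, Set.mem_singleton_iff, forall_eq]
    exact eq_comm
  have h : Nat.card (Subgroup.centralizer ({x} : Set A5)) =
      Nat.card {g : A5 // g * x = x * g} := Nat.card_congr (Equiv.subtypeEquivRight e)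
  rw [h, Nat.card_eq_fintype_card, Fintype.card_subtype]
  exact cent_card_aux x h2 h1

private lemma prime_mem (p : ℕ) (hp : p.Prime) (hdvd : p ∣ 60) : p = 2 ∨ p = 3 ∨ p = 5 := by
  have hle : p ≤ 60 := Nat.le_of_dvd (by norm_num) hdvd
  have h2 : 2 ≤ p := hp.two_le
  interval_cases p <;>
    first
      | (left; rfl)
      | (right; left; rfl)
      | (right; right; rfl)
      | (exact absurd hp (by decide))
      | (exact absurd hdvd (by decide))

private lemma pow_card_subgroup {G : Type*} [Group G] (H : Subgroup G) [Finite H]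
    {x : G} (hx : x ∈ H) : x ^ (Nat.card H) = 1 := by
  have h := pow_card_eq_one' (G := H) (x := ⟨x, hx⟩)
  rw [Subtype.ext_iff] at h
  simp only [SubmonoidClass.coe_pow, OneMemClass.coe_one] at h
  exact h

private lemma sylow_card (p : ℕ) [hp : Fact p.Prime] (P : Sylow p A5) :
    Nat.card P = p ^ (Nat.factorization 60 p) := by
  rw [Sylow.card_eq_multiplicity, a5_card]

private lemma fact260 : Nat.factorization 60 2 = 2 := by
  have h1 : 2 ≤ Nat.factorization 60 2 :=
    (Nat.Prime.pow_dvd_iff_le_factorization (by norm_num) (by norm_num)).mp (by norm_num)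
  have h2 : ¬ 3 ≤ Nat.factorization 60 2 := fun h =>
    absurd ((Nat.Prime.pow_dvd_iff_le_factorization (by norm_num) (by norm_num)).mpr h) (by norm_num)
  omega

private lemma fact360 : Nat.factorization 60 3 = 1 := by
  have h1 : 1 ≤ Nat.factorization 60 3 :=
    (Nat.Prime.pow_dvd_iff_le_factorization (by norm_num) (by norm_num)).mp (by norm_num)
  have h2 : ¬ 2 ≤ Nat.factorization 60 3 := fun h =>
    absurd ((Nat.Prime.pow_dvd_iff_le_factorization (by norm_num) (by norm_num)).mpr h) (by norm_num)
  omega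

private lemma fact560 : Nat.factorization 60 5 = 1 := by
  have h1 : 1 ≤ Nat.factorization 60 5 :=
    (Nat.Prime.pow_dvd_iff_le_factorization (by norm_num) (by norm_num)).mp (by norm_num)
  have h2 : ¬ 2 ≤ Nat.factorization 60 5 := fun h =>
    absurd ((Nat.Prime.pow_dvd_iff_le_factorization (by norm_num) (by norm_num)).mpr h) (by norm_num)
  omega

private instance f2i : Fact (Nat.Prime 2) := ⟨by norm_num⟩
private instance f3i : Fact (Nat.Prime 3) := ⟨by norm_num⟩
private instance f5i : Fact (Nat.Prime 5) := ⟨by norm_num⟩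

private lemma sylow_card2 (P : Sylow 2 A5) : Nat.card P = 4 := by
  rw [sylow_card, fact260]; norm_num

private lemma sylow_card3 (P : Sylow 3 A5) : Nat.card P = 3 := by
  rw [sylow_card, fact360, pow_one]

private lemma sylow_card5 (P : Sylow 5 A5) : Nat.card P = 5 := by
  rw [sylow_card, fact560, pow_one]


-- nontrivial Sylow p exists only for p ∈ {2,3,5}
private lemma sylow_nontriv (p : ℕ) [hp : Fact p.Prime] (P : Sylow p A5)
    {x : A5} (hx : x ∈ P) (hx1 : x ≠ 1) : p = 2 ∨ p = 3 ∨ p = 5 := by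
  refine prime_mem p hp.out ?_
  by_contra hdvd
  have h0 : Nat.factorization 60 p = 0 :=
    Nat.factorization_eq_zero_of_not_dvd hdvd
  have : Nat.card P = 1 := by rw [sylow_card, h0, pow_zero]
  have hb : (P : Subgroup A5) = ⊥ := Subgroup.card_eq_one.mp this
  exact hx1 (Subgroup.mem_bot.mp (hb ▸ hx))

-- elements of Sylow p satisfy x ^ p = 1 (for relevant p)
private lemma sylow_pow_eq_one (p : ℕ) [hp : Fact p.Prime] (P : Sylow p A5)
    {x : A5} (hx : x ∈ P) : x ^ p = 1 := by
  by_cases hx1 : x = 1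
  · simp [hx1]
  rcases sylow_nontriv p P hx hx1 with h | h | h
  · subst h
    have h4 : x ^ 4 = 1 := by
      have := pow_card_subgroup (P : Subgroup A5) hx
      rwa [sylow_card2 P] at this
    rcases a5_orders x with h' | h' | h'
    · exact h'
    · have hd : orderOf x ∣ Nat.gcd 3 4 :=
        Nat.dvd_gcd (orderOf_dvd_of_pow_eq_one h') (orderOf_dvd_of_pow_eq_one h4)
      norm_num at hd
      exact absurd hd hx1
    · have hd : orderOf x ∣ Nat.gcd 5 4 :=
        Nat.dvd_gcd (orderOf_dvd_of_pow_eq_one h') (orderOf_dvd_of_pow_eq_one h4)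
      norm_num at hd
      exact absurd hd hx1
  · subst h
    have h3 : x ^ 3 = 1 := by
      have := pow_card_subgroup (P : Subgroup A5) hx
      rwa [sylow_card3 P] at this
    exact h3
  · subst h
    have h5 : x ^ 5 = 1 := by
      have := pow_card_subgroup (P : Subgroup A5) hx
      rwa [sylow_card5 P] at this
    exact h5

private lemma uniq_sylow (p : ℕ) [hp : Fact p.Prime] (P Q : Sylow p A5)
    {x : A5} (hxP : x ∈ P) (hxQ : x ∈ Q) (hx1 : x ≠ 1) :
    (P : Subgroup A5) = (Q : Subgroup A5) := by
  rcases sylow_nontriv p P hxP hx1 with h | h | h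
  · subst h
    -- both P and Q equal centralizer of x
    have hx2 : x ^ 2 = 1 := sylow_pow_eq_one 2 P hxP
    have hcent : Nat.card (Subgroup.centralizer ({x} : Set A5)) = 4 := cent_card x hx2 hx1
    have key : ∀ R : Sylow 2 A5, x ∈ R → (R : Subgroup A5) = Subgroup.centralizer {x} := by
      intro R hxR
      have hcomm : ∀ a b : (R : Subgroup A5), a * b = b * a :=
        IsPGroup.commutative_of_card_eq_prime_sq (p := 2) (by rw [sylow_card2 R]; norm_num)
      have hle : (R : Subgroup A5) ≤ Subgroup.centralizer {x} := by
        intro g hg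
        rw [Subgroup.mem_centralizer_iff]
        intro y hy
        rcases Set.mem_singleton_iff.mp hy with rfl
        have := hcomm ⟨y, hxR⟩ ⟨g, hg⟩
        exact congrArg Subtype.val this
      exact Subgroup.eq_of_le_of_card_ge hle (by rw [hcent, sylow_card2])
    rw [key P hxP, key Q hxQ]
  · subst h
    have key : ∀ R : Sylow 3 A5, x ∈ R → (R : Subgroup A5) = Subgroup.zpowers x := by
      intro R hxR
      have hle : Subgroup.zpowers x ≤ (R : Subgroup A5) := Subgroup.zpowers_le.mpr hxR
      have hord : orderOf x = 3 := orderOf_eq_prime (sylow_pow_eq_one 3 R hxR) hx1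
      refine (Subgroup.eq_of_le_of_card_ge hle ?_).symm
      rw [Nat.card_zpowers, hord, sylow_card3]
    rw [key P hxP, key Q hxQ]
  · subst h
    have key : ∀ R : Sylow 5 A5, x ∈ R → (R : Subgroup A5) = Subgroup.zpowers x := by
      intro R hxR
      have hle : Subgroup.zpowers x ≤ (R : Subgroup A5) := Subgroup.zpowers_le.mpr hxR
      have hord : orderOf x = 5 := orderOf_eq_prime (sylow_pow_eq_one 5 R hxR) hx1
      refine (Subgroup.eq_of_le_of_card_ge hle ?_).symm
      rw [Nat.card_zpowers, hord, sylow_card5]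
    rw [key P hxP, key Q hxQ]

-- existence: any element with g ^ p = 1 is in some Sylow p
private lemma exists_sylow_mem {G : Type*} [Group G] [Finite G] (p : ℕ) (hp : p.Prime)
    {g : G} (h : g ^ p = 1) : ∃ P : Sylow p G, g ∈ P := by
  have hd : orderOf g ∣ p := orderOf_dvd_of_pow_eq_one h
  have hpg : IsPGroup p (Subgroup.zpowers g) := by
    rcases (Nat.Prime.eq_one_or_self_of_dvd hp _ hd) with h1 | h1
    · exact IsPGroup.of_card (by rw [Nat.card_zpowers, h1, pow_zero] ) (n := 0)
    · exact IsPGroup.of_card (by rw [Nat.card_zpowers, h1, pow_one]) (n := 1)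
  obtain ⟨P, hle⟩ := hpg.exists_le_sylow
  exact ⟨P, hle (Subgroup.mem_zpowers g)⟩

private lemma count_sylow (p : ℕ) [hp : Fact p.Prime] (m N : ℕ)
    (hm : ∀ P : Sylow p A5, Nat.card P = m + 1)
    (hN : (Finset.univ.filter (fun g : A5 => g ^ p = 1 ∧ g ≠ 1)).card = N) :
    Nat.card (Sylow p A5) * m = N := by
  classical
  have hft : Fintype (Sylow p A5) := Fintype.ofFinite _
  set E := {g : A5 // g ^ p = 1 ∧ g ≠ 1} with hE
  have hcE : Fintype.card E = N := by
    rw [Fintype.card_subtype]; exact hN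
  have hex : ∀ e : E, ∃ P : Sylow p A5, e.1 ∈ P := fun e => exists_sylow_mem p hp.out e.2.1
  let f : E → Sylow p A5 := fun e => (hex e).choose
  have hf : ∀ e : E, e.1 ∈ f e := fun e => (hex e).choose_spec
  have hsum : (Finset.univ : Finset E).card =
      ∑ P ∈ (Finset.univ : Finset (Sylow p A5)), ((Finset.univ : Finset E).filter
        (fun e => f e = P)).card :=
    Finset.card_eq_sum_card_fiberwise (fun e _ => Finset.mem_univ (f e))
  have hfib : ∀ P : Sylow p A5,
      ((Finset.univ : Finset E).filter (fun e => f e = P)).card = m := by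
    intro P
    have e1 : {e : E // f e = P} ≃ {y : (P : Subgroup A5) // y ≠ 1} :=
      { toFun := fun e => ⟨⟨e.1.1, by have := hf e.1; rwa [e.2] at this⟩, fun h => e.1.2.2 (congrArg Subtype.val h)⟩
        invFun := fun y => ⟨⟨y.1.1, sylow_pow_eq_one p P y.1.2,
            fun h => y.2 (Subtype.ext h)⟩,
          Sylow.ext (uniq_sylow p _ P (hf ⟨y.1.1, sylow_pow_eq_one p P y.1.2,
            fun h => y.2 (Subtype.ext h)⟩) y.1.2 (fun h => y.2 (Subtype.ext h)))⟩
        left_inv := fun e => Subtype.ext (Subtype.ext rfl)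
        right_inv := fun y => Subtype.ext (Subtype.ext rfl) }
    have e2 : Fintype.card {y : (P : Subgroup A5) // y ≠ 1} = m := by
      have := Fintype.card_subtype_compl (fun y : (P : Subgroup A5) => y = 1)
      rw [Fintype.card_subtype_eq] at this
      have hcP : Fintype.card (P : Subgroup A5) = m + 1 := by
        rw [← Nat.card_eq_fintype_card]; exact hm P
      simp only [ne_eq]
      rw [this, hcP]
      omega
    rw [← Fintype.card_subtype, Fintype.card_congr e1]
    exact e2
  have hcard : Fintype.card E = Fintype.card (Sylow p A5) * m := by
    have h0 : Fintype.card E = (Finset.univ : Finset E).card := rfl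
    rw [h0, hsum, Finset.sum_congr rfl (fun P _ => hfib P), Finset.sum_const,
      smul_eq_mul, Finset.card_univ]
  rw [Nat.card_eq_fintype_card, ← hcE, hcard]

private lemma part3 (p q : ℕ) (hp : p.Prime) (hq : q.Prime)
    (P : Sylow p A5) (Q : Sylow q A5)
    (hne : (P : Subgroup A5) ≠ (Q : Subgroup A5))
    (x : A5) (hxP : x ∈ P) (y : A5) (hyQ : y ∈ Q) (hx1 : x ≠ 1) (hy1 : y ≠ 1) :
    ¬ Group.IsNilpotent ↥(Subgroup.closure ({x, y} : Set A5)) := by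
  intro hnil
  haveI hpf := Fact.mk hp
  haveI hqf := Fact.mk hq
  have hxp : x ^ p = 1 := sylow_pow_eq_one p P hxP
  have hyq : y ^ q = 1 := sylow_pow_eq_one q Q hyQ
  set H := Subgroup.closure ({x, y} : Set A5) with hHdef
  have hxH : x ∈ H := Subgroup.subset_closure (by simp)
  have hyH : y ∈ H := Subgroup.subset_closure (by simp)
  set x' : H := ⟨x, hxH⟩ with hx'def
  set y' : H := ⟨y, hyH⟩ with hy'def
  have hx'p : x' ^ p = 1 := Subtype.ext (by simp [hx'def, hxp])
  have hy'q : y' ^ q = 1 := Subtype.ext (by simp [hy'def, hyq])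
  obtain ⟨P', hP'⟩ := exists_sylow_mem (G := H) p hp hx'p
  obtain ⟨Q', hQ'⟩ := exists_sylow_mem (G := H) q hq hy'q
  have hnorm := ((isNilpotent_of_finite_tfae (G := H)).out 0 3).mp hnil
  by_cases hpq : p = q
  · subst hpq
    haveI hn : (P' : Subgroup H).Normal := hnorm p hpf P'
    obtain ⟨g, hg⟩ := MulAction.exists_smul_eq H P' Q'
    have hQP : Q' = P' := by rw [← hg, Sylow.smul_eq_of_normal]
    have hpg : IsPGroup p ((P' : Subgroup H).map H.subtype) := P'.isPGroup'.map _
    obtain ⟨R, hR⟩ := hpg.exists_le_sylow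
    have hxR : x ∈ R := hR (Subgroup.mem_map.mpr ⟨x', hP', rfl⟩)
    have hyR : y ∈ R := hR (Subgroup.mem_map.mpr ⟨y', hQP ▸ hQ', rfl⟩)
    exact hne ((uniq_sylow p P R hxP hxR hx1).trans (uniq_sylow p Q R hyQ hyR hy1).symm)
  · haveI hn1 : (P' : Subgroup H).Normal := hnorm p hpf P'
    haveI hn2 : (Q' : Subgroup H).Normal := hnorm q hqf Q'
    have hdis : Disjoint (P' : Subgroup H) (Q' : Subgroup H) :=
      IsPGroup.disjoint_of_ne p q hpq _ _ P'.isPGroup' Q'.isPGroup'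
    have hcomm' : Commute x' y' :=
      Subgroup.commute_of_normal_of_disjoint _ _ hn1 hn2 hdis x' y' hP' hQ'
    have hcomm : Commute x y := by
      have := Subtype.ext_iff.mp hcomm'
      exact (by simpa [hx'def, hy'def] using this : x * y = y * x)
    have hox : orderOf x = p := orderOf_eq_prime hxp hx1
    have hoy : orderOf y = q := orderOf_eq_prime hyq hy1
    have hord : orderOf (x * y) = p * q := by
      rw [hcomm.orderOf_mul_eq_mul_orderOf_of_coprime (by
        rw [hox, hoy]; exact (Nat.coprime_primes hp hq).mpr hpq), hox, hoy]
    have hp3 : p = 2 ∨ p = 3 ∨ p = 5 := sylow_nontriv p P hxP hx1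
    have hq3 : q = 2 ∨ q = 3 ∨ q = 5 := sylow_nontriv q Q hyQ hy1
    have hle : p * q ≤ 5 := by
      rcases a5_orders (x * y) with h' | h' | h' <;>
        [ exact hord ▸ Nat.le_of_dvd (by norm_num) (orderOf_dvd_of_pow_eq_one h') |>.trans (by norm_num);
          exact hord ▸ Nat.le_of_dvd (by norm_num) (orderOf_dvd_of_pow_eq_one h') |>.trans (by norm_num);
          exact hord ▸ Nat.le_of_dvd (by norm_num) (orderOf_dvd_of_pow_eq_one h')]
    rcases hp3 with rfl | rfl | rfl <;> rcases hq3 with rfl | rfl | rfl <;> omega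


private lemma countE2 : (Finset.univ.filter (fun g : A5 => g ^ 2 = 1 ∧ g ≠ 1)).card = 15 := by
  decide

private lemma countE3 : (Finset.univ.filter (fun g : A5 => g ^ 3 = 1 ∧ g ≠ 1)).card = 20 := by
  decide

private lemma countE5 : (Finset.univ.filter (fun g : A5 => g ^ 5 = 1 ∧ g ≠ 1)).card = 24 := by
  decide

theorem stmt7 :
    (Nat.card (Sylow 2 (alternatingGroup (Fin 5))) = 5 ∧
     Nat.card (Sylow 3 (alternatingGroup (Fin 5))) = 10 ∧
     Nat.card (Sylow 5 (alternatingGroup (Fin 5))) = 6) ∧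
    (∀ g : alternatingGroup (Fin 5), ∃ p : ℕ, p.Prime ∧
      ∃ P : Sylow p (alternatingGroup (Fin 5)), g ∈ P) ∧
    (∀ p q : ℕ, p.Prime → q.Prime →
      ∀ (P : Sylow p (alternatingGroup (Fin 5))) (Q : Sylow q (alternatingGroup (Fin 5))),
        (P : Subgroup (alternatingGroup (Fin 5))) ≠ (Q : Subgroup (alternatingGroup (Fin 5))) →
        ∀ x ∈ P, ∀ y ∈ Q, x ≠ 1 → y ≠ 1 →
          ¬ Group.IsNilpotent
            ↥(Subgroup.closure ({x, y} : Set (alternatingGroup (Fin 5))))) := by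
  refine ⟨⟨?_, ?_, ?_⟩, ?_, ?_⟩
  · have h := count_sylow 2 3 15 (fun P => by rw [sylow_card2]) countE2
    show Nat.card (Sylow 2 A5) = 5
    omega
  · have h := count_sylow 3 2 20 (fun P => by rw [sylow_card3]) countE3
    show Nat.card (Sylow 3 A5) = 10
    omega
  · have h := count_sylow 5 4 24 (fun P => by rw [sylow_card5]) countE5
    show Nat.card (Sylow 5 A5) = 6
    omega
  · intro g
    rcases a5_orders g with h | h | h
    · exact ⟨2, by norm_num, exists_sylow_mem 2 (by norm_num) h⟩
    · exact ⟨3, by norm_num, exists_sylow_mem 3 (by norm_num) h⟩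
    · exact ⟨5, by norm_num, exists_sylow_mem 5 (by norm_num) h⟩
  · intro p q hp hq P Q hne x hxP y hyQ hx1 hy1
    exact part3 p q hp hq P Q hne x hxP y hyQ hx1 hy1
end

section
/- Let G be a group satisfying condition (A, n) with n > 1, and let N be a normal non-abelian subgroup of G. Then G/N satisfies condition (A, n−1). -/
def CondA (G : Type*) [Group G] (n : ℕ) : Prop :=
  ∀ S : Finset G, S.card = n + 1 → ∃ x ∈ S, ∃ y ∈ S, x ≠ y ∧ x * y = y * x

theorem stmt18 (G : Type*) [Group G] (n : ℕ) (hn : 1 < n) (h : CondA G n)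
    (N : Subgroup G) [N.Normal] (hna : ¬ ∀ x ∈ N, ∀ y ∈ N, x * y = y * x) :
    CondA (G ⧸ N) (n - 1) := by
  classical
  push_neg at hna
  obtain ⟨a, ha, b, hb, hab⟩ := hna
  intro S hS
  rw [Nat.sub_add_cancel hn.le] at hS
  have hSne : S.Nonempty := by rw [← Finset.card_pos, hS]; omega
  obtain ⟨s, hs⟩ := hSne
  set r : G ⧸ N → G := fun q => Quotient.out q with hrdef
  have hrmk : ∀ q : G ⧸ N, ((r q : G) : G ⧸ N) = q := fun q => Quotient.out_eq' q
  have hrinj : Function.Injective r := by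
    intro q1 q2 hq
    rw [← hrmk q1, ← hrmk q2, hq]
  have mkpair : ∀ g1 g2 : G, g1 * g2 = g2 * g1 → ((g1 : G ⧸ N) ∈ S) → ((g2 : G ⧸ N) ∈ S) →
      (g1 : G ⧸ N) ≠ (g2 : G ⧸ N) → ∃ x ∈ S, ∃ y ∈ S, x ≠ y ∧ x * y = y * x := by
    intro g1 g2 hc h1 h2 hne
    exact ⟨g1, h1, g2, h2, hne, by rw [← QuotientGroup.mk_mul, hc, QuotientGroup.mk_mul]⟩
  have key : ∀ u v : G, (u : G ⧸ N) = s → (v : G ⧸ N) = s → u ≠ v →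
      (∃ x ∈ S, ∃ y ∈ S, x ≠ y ∧ x * y = y * x) ∨ u * v = v * u := by
    intro u v hu hv huv
    set img : Finset G := (S.erase s).image r with himg
    have hmem : ∀ g ∈ img, (g : G ⧸ N) ∈ S.erase s := by
      intro g hg
      obtain ⟨q, hq, rfl⟩ := Finset.mem_image.mp hg
      rwa [hrmk]
    have hunotin : u ∉ img := by
      intro hc
      have := hmem u hc
      rw [hu] at this
      exact (Finset.mem_erase.mp this).1 rfl
    have hvnotin : v ∉ img := by
      intro hc
      have := hmem v hc
      rw [hv] at this
      exact (Finset.mem_erase.mp this).1 rfl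
    have hci : ((S.erase s).image r).card
        = (S.erase s).card := Finset.card_image_of_injective _ hrinj
    have hcard : (insert u (insert v img)).card = n + 1 := by
      rw [Finset.card_insert_of_notMem (by simp [Finset.mem_insert, huv, hunotin]),
        Finset.card_insert_of_notMem hvnotin, himg, hci,
        Finset.card_erase_of_mem hs, hS]
      omega
    obtain ⟨g1, hg1, g2, hg2, hne, hcomm⟩ := h _ hcard
    -- analyze membership
    have hcase : ∀ g ∈ insert u (insert v img), (g : G ⧸ N) = s ∨
        ((g : G ⧸ N) ∈ S.erase s ∧ g = r (g : G ⧸ N)) := by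
      intro g hg
      rcases Finset.mem_insert.mp hg with rfl | hg
      · exact Or.inl hu
      rcases Finset.mem_insert.mp hg with rfl | hg
      · exact Or.inl hv
      · obtain ⟨q, hq, rfl⟩ := Finset.mem_image.mp hg
        refine Or.inr ⟨by rwa [hrmk], by rw [hrmk]⟩
    rcases hcase g1 hg1 with h1 | h1 <;> rcases hcase g2 hg2 with h2 | h2
    · -- both project to s : then {g1,g2} ⊆ {u,v}, and we get u*v=v*u
      right
      have e1 : g1 = u ∨ g1 = v := by
        rcases Finset.mem_insert.mp hg1 with rfl | hg1'
        · exact Or.inl rfl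
        rcases Finset.mem_insert.mp hg1' with rfl | hg1''
        · exact Or.inr rfl
        · exact absurd ((hmem g1 hg1'')) (by rw [h1]; simp)
      have e2 : g2 = u ∨ g2 = v := by
        rcases Finset.mem_insert.mp hg2 with rfl | hg2'
        · exact Or.inl rfl
        rcases Finset.mem_insert.mp hg2' with rfl | hg2''
        · exact Or.inr rfl
        · exact absurd ((hmem g2 hg2'')) (by rw [h2]; simp)
      rcases e1 with rfl | rfl <;> rcases e2 with rfl | rfl
      · exact absurd rfl hne
      · exact hcomm
      · exact hcomm.symm
      · exact absurd rfl hne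
    · left
      exact mkpair g1 g2 hcomm (h1 ▸ hs) (Finset.mem_of_mem_erase h2.1)
        (by rw [h1]; exact fun hc => (Finset.mem_erase.mp h2.1).1 hc.symm)
    · left
      exact mkpair g1 g2 hcomm (Finset.mem_of_mem_erase h1.1) (h2 ▸ hs)
        (by rw [h2]; exact (Finset.mem_erase.mp h1.1).1)
    · left
      refine mkpair g1 g2 hcomm (Finset.mem_of_mem_erase h1.1) (Finset.mem_of_mem_erase h2.1) ?_
      intro hc
      apply hne
      rw [h1.2, h2.2, hc]
  -- now apply key three times
  have ha1 : (a : G ⧸ N) = 1 := (QuotientGroup.eq_one_iff a).mpr ha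
  have hb1 : (b : G ⧸ N) = 1 := (QuotientGroup.eq_one_iff b).mpr hb
  have hane : a ≠ 1 := by rintro rfl; exact hab (by group)
  have hbne : b ≠ 1 := by rintro rfl; exact hab (by group)
  have habne : a ≠ b := by rintro rfl; exact hab rfl
  set x : G := r s with hx
  have hxs : (x : G ⧸ N) = s := hrmk s
  have hxa : ((x * a : G) : G ⧸ N) = s := by rw [QuotientGroup.mk_mul, ha1, mul_one, hxs]
  have hxb : ((x * b : G) : G ⧸ N) = s := by rw [QuotientGroup.mk_mul, hb1, mul_one, hxs]
  rcases key x (x * a) hxs hxa (by simpa using hane) with hk | hk1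
  · exact hk
  rcases key x (x * b) hxs hxb (by simpa using hbne) with hk | hk2
  · exact hk
  rcases key (x * a) (x * b) hxa hxb (by simpa using habne) with hk | hk3
  · exact hk
  -- derive contradiction
  exfalso
  apply hab
  rw [mul_assoc] at hk1 hk2
  have e1 : x * a = a * x := mul_left_cancel hk1
  have e2 : x * b = b * x := mul_left_cancel hk2
  have h4 : x * (x * (a * b)) = x * (x * (b * a)) := by
    rw [show x*a*(x*b) = x*(a*x)*b by group, show x*b*(x*a) = x*(b*x)*a by group,
      ← e1, ← e2] at hk3
    calc x * (x * (a * b)) = x * (x * a) * b := by group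
    _ = x * (x * b) * a := hk3
    _ = x * (x * (b * a)) := by group
  exact mul_left_cancel (mul_left_cancel h4)
end
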